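/- Let T ≥ 1 be an integer and Φ_T = h^T ∘ g̃. For any two n×n symmetric positive semidefinite matrices X and Y, with Kalman gains K_X = X Cᵀ (C X Cᵀ + R)⁻¹ and K_Y = Y Cᵀ (C Y Cᵀ + R)⁻¹, the following difference identity holds: Φ_T(X) − Φ_T(Y) = A^T (I − K_Y C) (X − Y) (I − K_X C)ᵀ (Aᵀ)^T. -/

import Mathlib

open Matrix

lemma stmt12_key {q : ℕ} (SX SY MX MY R : Matrix (Fin q) (Fin q) ℝ)
    (hSX : SX = MX + R) (hSY : SY = MY + R)
    (hx : IsUnit SX.det) (hy : IsUnit SY.det) :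
    SY⁻¹ - SY⁻¹ * MX * SX⁻¹ = SX⁻¹ - SY⁻¹ * MY * SX⁻¹ := by
  have h1 : SY⁻¹ * (SX - MX) * SX⁻¹ = SY⁻¹ * (SY - MY) * SX⁻¹ := by
    rw [hSX, hSY, add_sub_cancel_left, add_sub_cancel_left]
  have e1 : SY⁻¹ * (SX - MX) * SX⁻¹ = SY⁻¹ - SY⁻¹ * MX * SX⁻¹ := by
    rw [Matrix.mul_sub, Matrix.sub_mul, Matrix.mul_assoc SY⁻¹ SX,
      Matrix.mul_nonsing_inv _ hx, Matrix.mul_one, Matrix.mul_assoc]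
  have e2 : SY⁻¹ * (SY - MY) * SX⁻¹ = SX⁻¹ - SY⁻¹ * MY * SX⁻¹ := by
    rw [Matrix.mul_sub, Matrix.sub_mul, Matrix.nonsing_inv_mul _ hy, Matrix.one_mul,
      Matrix.mul_assoc]
  rw [← e1, h1, e2]

lemma stmt12_alg {n q : ℕ} (X Y : Matrix (Fin n) (Fin n) ℝ) (C : Matrix (Fin q) (Fin n) ℝ)
    (U V : Matrix (Fin q) (Fin q) ℝ)
    (key2 : Y * Cᵀ * (V - V * (C * X * Cᵀ) * U) * (C * X)
      = Y * Cᵀ * (U - V * (C * Y * Cᵀ) * U) * (C * X)) :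
    X - X * Cᵀ * U * C * X - (Y - Y * Cᵀ * V * C * Y)
      = (1 - Y * Cᵀ * V * C) * (X - Y) * (1 - Cᵀ * (U * C * X)) := by
  linear_combination (norm :=
    (simp only [Matrix.mul_sub, Matrix.sub_mul, Matrix.mul_add, Matrix.add_mul, Matrix.mul_one,
      Matrix.one_mul, Matrix.mul_assoc, Matrix.mul_smul, Matrix.smul_mul]; abel)) key2

set_option maxHeartbeats 2000000 in
/-- Difference identity for `Φ_T = h^T ∘ g̃`:
`Φ_T(X) − Φ_T(Y) = A^T (I − K_Y C) (X − Y) (I − K_X C)ᵀ (Aᵀ)^T`. -/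
theorem stmt_12 {n q : ℕ} (A : Matrix (Fin n) (Fin n) ℝ) (C : Matrix (Fin q) (Fin n) ℝ)
    (Q : Matrix (Fin n) (Fin n) ℝ) (hQ : Q.PosSemidef)
    (R : Matrix (Fin q) (Fin q) ℝ) (hR : R.PosDef)
    (h gt : Matrix (Fin n) (Fin n) ℝ → Matrix (Fin n) (Fin n) ℝ)
    (hh : ∀ X, h X = A * X * Aᵀ + Q)
    (hgt : ∀ X, gt X = X - X * Cᵀ * (C * X * Cᵀ + R)⁻¹ * C * X)
    (T : ℕ) (hT : 1 ≤ T)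
    (X Y : Matrix (Fin n) (Fin n) ℝ) (hX : X.PosSemidef) (hY : Y.PosSemidef)
    (KX KY : Matrix (Fin n) (Fin q) ℝ)
    (hKX : KX = X * Cᵀ * (C * X * Cᵀ + R)⁻¹)
    (hKY : KY = Y * Cᵀ * (C * Y * Cᵀ + R)⁻¹) :
    h^[T] (gt X) - h^[T] (gt Y)
      = A ^ T * ((1 - KY * C) * (X - Y) * (1 - KX * C)ᵀ) * Aᵀ ^ T := by
  -- notation
  set SX := C * X * Cᵀ + R with hSXdef
  set SY := C * Y * Cᵀ + R with hSYdef
  have hCT : Cᵀ = Cᴴ := by ext i j; simp [conjTranspose]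
  have hMX : (C * X * Cᵀ).PosSemidef := by rw [hCT]; exact hX.mul_mul_conjTranspose_same C
  have hMY : (C * Y * Cᵀ).PosSemidef := by rw [hCT]; exact hY.mul_mul_conjTranspose_same C
  have hSX : SX.PosDef := Matrix.PosDef.posSemidef_add hMX hR
  have hSY : SY.PosDef := Matrix.PosDef.posSemidef_add hMY hR
  have hux : IsUnit SX.det := hSX.det_pos.ne'.isUnit
  have huy : IsUnit SY.det := hSY.det_pos.ne'.isUnit
  have hXs : Xᵀ = X := by simpa [Matrix.IsHermitian, Matrix.conjTranspose_eq_transpose_of_trivial] using hX.isHermitian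
  have hYs : Yᵀ = Y := by simpa [Matrix.IsHermitian, Matrix.conjTranspose_eq_transpose_of_trivial] using hY.isHermitian
  have hSXs : SXᵀ = SX := by
    simp [hSXdef, Matrix.transpose_add, Matrix.transpose_mul, hXs, Matrix.mul_assoc,
      show Rᵀ = R by simpa [Matrix.IsHermitian, Matrix.conjTranspose_eq_transpose_of_trivial] using hR.isHermitian]
  have hSYs : SYᵀ = SY := by
    simp [hSYdef, Matrix.transpose_add, Matrix.transpose_mul, hYs, Matrix.mul_assoc,
      show Rᵀ = R by simpa [Matrix.IsHermitian, Matrix.conjTranspose_eq_transpose_of_trivial] using hR.isHermitian]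
  have hSXi : SX⁻¹ᵀ = SX⁻¹ := by rw [Matrix.transpose_nonsing_inv, hSXs]
  have hSYi : SY⁻¹ᵀ = SY⁻¹ := by rw [Matrix.transpose_nonsing_inv, hSYs]
  -- the one-step (gt) difference identity
  have hKXt : KXᵀ = SX⁻¹ * C * X := by
    rw [hKX]
    simp [Matrix.transpose_mul, hSXi, hXs, Matrix.mul_assoc]
  have key := stmt12_key SX SY (C * X * Cᵀ) (C * Y * Cᵀ) R rfl rfl hux huy
  have key2 : Y * Cᵀ * (SY⁻¹ - SY⁻¹ * (C * X * Cᵀ) * SX⁻¹) * (C * X)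
      = Y * Cᵀ * (SX⁻¹ - SY⁻¹ * (C * Y * Cᵀ) * SX⁻¹) * (C * X) := by rw [key]
  have hgtdiff : gt X - gt Y = (1 - KY * C) * (X - Y) * (1 - KX * C)ᵀ := by
    rw [hgt, hgt, hKY, Matrix.transpose_sub, Matrix.transpose_one, Matrix.transpose_mul, hKXt,
      ← hSXdef, ← hSYdef]
    exact stmt12_alg X Y C SX⁻¹ SY⁻¹ key2
  -- iterate h
  have hiter : ∀ (k : ℕ) (U V : Matrix (Fin n) (Fin n) ℝ),
      h^[k] U - h^[k] V = A ^ k * (U - V) * Aᵀ ^ k := by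
    intro k
    induction k with
    | zero => intro U V; simp
    | succ m ih =>
      intro U V
      rw [Function.iterate_succ_apply', Function.iterate_succ_apply', hh, hh]
      have : A * (h^[m] U) * Aᵀ + Q - (A * (h^[m] V) * Aᵀ + Q)
          = A * (h^[m] U - h^[m] V) * Aᵀ := by
        rw [Matrix.mul_sub, Matrix.sub_mul]; abel
      rw [this, ih U V, pow_succ' A m, pow_succ (Aᵀ) m]
      simp only [Matrix.mul_assoc]
  rw [hiter T (gt X) (gt Y), hgtdiff]
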